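/- Let (D, ⊑) be a finite partial order with a least element ⊥, let f₁, …, f_k be inflationary and monotonic functions from D to D, and let σ : ℕ → {1, …, k} be a fair schedule, i.e., every index in {1, …, k} occurs infinitely often in σ. Define the sequence d₀ := ⊥ and d_{n+1} := f_{σ(n)}(d_n). Then there exists N such that d_n = d_N for all n ≥ N, and d_N is the least common fixpoint of {f₁, …, f_k}. -/

import Mathlib

/-- A fair iteration of inflationary monotonic functions on a finite partial order
starting from `⊥` stabilizes, and its limit is the least common fixpoint. -/
theorem fair_iteration_least_common_fixpoint
    {D : Type*} [PartialOrder D] [Fintype D] [OrderBot D]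
    (k : ℕ) (f : Fin k → D → D)
    (hinf : ∀ i, ∀ x : D, x ≤ f i x)
    (hmono : ∀ i, ∀ x y : D, x ≤ y → f i x ≤ f i y)
    (σ : ℕ → Fin k)
    (hfair : ∀ i : Fin k, ∀ N : ℕ, ∃ n ≥ N, σ n = i)
    (d : ℕ → D) (hd0 : d 0 = ⊥) (hds : ∀ n : ℕ, d (n + 1) = f (σ n) (d n)) :
    ∃ N : ℕ, (∀ n ≥ N, d n = d N) ∧
      (∀ i, f i (d N) = d N) ∧
      ∀ e : D, (∀ i, f i e = e) → d N ≤ e := by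
  have hmonod : Monotone d := by
    apply monotone_nat_of_le_succ
    intro n
    rw [hds n]
    exact hinf _ _
  -- find a maximal element in the range of d
  obtain ⟨x, ⟨N, hN⟩, hmax⟩ :=
    Set.Finite.exists_maximalFor id (Set.range d) (Set.toFinite _) ⟨d 0, 0, rfl⟩
  have hstab : ∀ n ≥ N, d n = d N := by
    intro n hn
    have h1 : d N ≤ d n := hmonod hn
    have := hmax (j := d n) ⟨n, rfl⟩ (by simpa [hN] using h1)
    simp only [id] at this
    rw [hN]; rw [hN] at h1; exact le_antisymm this h1
  refine ⟨N, hstab, ?_, ?_⟩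
  · intro i
    obtain ⟨n, hnN, hσ⟩ := hfair i N
    have := hds n
    rw [hσ, hstab n hnN, hstab (n + 1) (by omega)] at this
    exact this.symm
  · intro e he
    have : ∀ n, d n ≤ e := by
      intro n
      induction n with
      | zero => rw [hd0]; exact bot_le
      | succ n ih =>
        rw [hds n, ← he (σ n)]
        exact hmono _ _ _ ih
    exact this N
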